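/- arXiv:2411.07296 — 2 statements merged into one kernel-verified Lean document; each statement's English description precedes it below -/
import Mathlib

section
/- Von Neumann's trace inequality: for complex n×n matrices A and B with singular values α₁ ≥ … ≥ α_n and β₁ ≥ … ≥ β_n respectively, |Tr[AB]| ≤ Σ_{i=1}^n α_i β_i. -/
open Matrix

open Finset

/-- The singular values of a complex matrix (eigenvalues of `√(M†M)`). -/
noncomputable def singVals {n m : ℕ} (M : Matrix (Fin n) (Fin m) ℂ) : Fin m → ℝ :=
  fun i => Real.sqrt ((Matrix.isHermitian_conjTranspose_mul_self M).eigenvalues i)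

lemma singVals_nonneg {n m : ℕ} (M : Matrix (Fin n) (Fin m) ℂ) (i : Fin m) :
    0 ≤ singVals M i := Real.sqrt_nonneg _

lemma singVals_sq {n m : ℕ} (M : Matrix (Fin n) (Fin m) ℂ) (i : Fin m) :
    singVals M i ^ 2 = (Matrix.isHermitian_conjTranspose_mul_self M).eigenvalues i :=
  Real.sq_sqrt (Matrix.eigenvalues_conjTranspose_mul_self_nonneg M i)

/-- Abel-summation style rewriting of `∑ A i * g i` for a sequence vanishing at `n`. -/
lemma vn_abel (n : ℕ) (A : ℕ → ℝ) (hAn : A n = 0) (g : ℕ → ℝ) :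
    ∑ i ∈ range n, A i * g i
      = ∑ k ∈ range n, (A k - A (k+1)) * ∑ i ∈ range (k+1), g i := by
  have hAi : ∀ i, i ≤ n → A i = ∑ k ∈ Ico i n, (A k - A (k+1)) := by
    intro i hi
    rw [Finset.sum_Ico_eq_sub _ hi, Finset.sum_range_sub' A, Finset.sum_range_sub' A, hAn]
    ring
  calc ∑ i ∈ range n, A i * g i
      = ∑ i ∈ range n, ∑ k ∈ Ico i n, (A k - A (k+1)) * g i := by
        refine Finset.sum_congr rfl fun i hi => ?_
        rw [hAi i (mem_range.1 hi).le, Finset.sum_mul]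
    _ = ∑ k ∈ range n, ∑ i ∈ range (k+1), (A k - A (k+1)) * g i := by
        refine Finset.sum_comm' ?_
        intro i k
        simp only [mem_range, mem_Ico]
        omega
    _ = ∑ k ∈ range n, (A k - A (k+1)) * ∑ i ∈ range (k+1), g i := by
        simp [Finset.mul_sum]

/-- The key combinatorial inequality: a doubly substochastic weighting of products of two
nonincreasing nonnegative sequences is at most the aligned sum of products. -/
lemma vn_key_nat (n : ℕ) (A B : ℕ → ℝ) (S : ℕ → ℕ → ℝ)
    (hAa : ∀ k, A (k+1) ≤ A k) (hBa : ∀ k, B (k+1) ≤ B k)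
    (hAn : A n = 0) (hBn : B n = 0)
    (hS0 : ∀ i j, 0 ≤ S i j)
    (hrow : ∀ i, i < n → ∑ j ∈ range n, S i j ≤ 1)
    (hcol : ∀ j, j < n → ∑ i ∈ range n, S i j ≤ 1) :
    ∑ i ∈ range n, ∑ j ∈ range n, A i * B j * S i j ≤ ∑ i ∈ range n, A i * B i := by
  have ha0 : ∀ k, 0 ≤ A k - A (k+1) := fun k => sub_nonneg.2 (hAa k)
  have hb0 : ∀ k, 0 ≤ B k - B (k+1) := fun k => sub_nonneg.2 (hBa k)
  have hBi : ∀ i, i ≤ n → B i = ∑ l ∈ Ico i n, (B l - B (l+1)) := by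
    intro i hi
    rw [Finset.sum_Ico_eq_sub _ hi, Finset.sum_range_sub' B, Finset.sum_range_sub' B, hBn]
    ring
  have hL : ∑ i ∈ range n, ∑ j ∈ range n, A i * B j * S i j
      = ∑ k ∈ range n, (A k - A (k+1)) *
          ∑ l ∈ range n, (B l - B (l+1)) *
            ∑ j ∈ range (l+1), ∑ i ∈ range (k+1), S i j := by
    have e1 : ∑ i ∈ range n, ∑ j ∈ range n, A i * B j * S i j
        = ∑ i ∈ range n, A i * ∑ j ∈ range n, B j * S i j := by
      simp [Finset.mul_sum, mul_assoc]
    rw [e1, vn_abel n A hAn]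
    refine Finset.sum_congr rfl fun k hk => ?_
    congr 1
    have e2 : ∑ i ∈ range (k+1), ∑ j ∈ range n, B j * S i j
        = ∑ j ∈ range n, B j * ∑ i ∈ range (k+1), S i j := by
      rw [Finset.sum_comm]
      simp [Finset.mul_sum]
    rw [e2, vn_abel n B hBn]
  have hR : ∑ i ∈ range n, A i * B i
      = ∑ k ∈ range n, (A k - A (k+1)) *
          ∑ l ∈ range n, (B l - B (l+1)) * (min (k+1) (l+1) : ℕ) := by
    rw [vn_abel n A hAn]
    refine Finset.sum_congr rfl fun k hk => ?_
    congr 1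
    have e3 : ∑ i ∈ range (k+1), B i
        = ∑ i ∈ range (k+1), ∑ l ∈ Ico i n, (B l - B (l+1)) := by
      refine Finset.sum_congr rfl fun i hi => ?_
      exact hBi i (by
        have := mem_range.1 hi; have := mem_range.1 hk; omega)
    rw [e3]
    rw [Finset.sum_comm' (s' := fun l => range (min (k+1) (l+1))) (t' := range n)
      (by intro i l; simp only [mem_range, mem_Ico]; omega)]
    refine Finset.sum_congr rfl fun l hl => ?_
    rw [Finset.sum_const, card_range, nsmul_eq_mul, mul_comm]
  rw [hL, hR]
  refine Finset.sum_le_sum fun k hk => ?_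
  refine mul_le_mul_of_nonneg_left ?_ (ha0 k)
  refine Finset.sum_le_sum fun l hl => ?_
  refine mul_le_mul_of_nonneg_left ?_ (hb0 l)
  have hk' := mem_range.1 hk
  have hl' := mem_range.1 hl
  have h1 : ∑ j ∈ range (l+1), ∑ i ∈ range (k+1), S i j ≤ l+1 := by
    calc ∑ j ∈ range (l+1), ∑ i ∈ range (k+1), S i j
        ≤ ∑ j ∈ range (l+1), (1:ℝ) := by
          refine Finset.sum_le_sum fun j hj => ?_
          calc ∑ i ∈ range (k+1), S i j ≤ ∑ i ∈ range n, S i j :=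
                Finset.sum_le_sum_of_subset_of_nonneg
                  (Finset.range_subset_range.2 (by omega)) (fun i _ _ => hS0 i j)
            _ ≤ 1 := hcol j (by have := mem_range.1 hj; omega)
      _ = l+1 := by simp
  have h2 : ∑ j ∈ range (l+1), ∑ i ∈ range (k+1), S i j ≤ k+1 := by
    rw [Finset.sum_comm]
    calc ∑ i ∈ range (k+1), ∑ j ∈ range (l+1), S i j
        ≤ ∑ i ∈ range (k+1), (1:ℝ) := by
          refine Finset.sum_le_sum fun i hi => ?_
          calc ∑ j ∈ range (l+1), S i j ≤ ∑ j ∈ range n, S i j :=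
                Finset.sum_le_sum_of_subset_of_nonneg
                  (Finset.range_subset_range.2 (by omega)) (fun j _ _ => hS0 i j)
            _ ≤ 1 := hrow i (by have := mem_range.1 hi; omega)
      _ = k+1 := by simp
  push_cast
  rw [le_min_iff]
  constructor <;> push_cast <;> [exact h2; exact h1]

/-- `Fin`-indexed version of the key inequality, with sorting permutations built in. -/
lemma vn_key_fin {n : ℕ} (σ τ α β : Fin n → ℝ) (e f : Equiv.Perm (Fin n))
    (hαe : α = σ ∘ e) (hβf : β = τ ∘ f) (hαa : Antitone α) (hβa : Antitone β)
    (hσ0 : ∀ i, 0 ≤ σ i) (hτ0 : ∀ i, 0 ≤ τ i)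
    (S : Fin n → Fin n → ℝ) (hS0 : ∀ i j, 0 ≤ S i j)
    (hrow : ∀ i, ∑ j, S i j ≤ 1) (hcol : ∀ j, ∑ i, S i j ≤ 1) :
    ∑ i, ∑ j, σ i * τ j * S i j ≤ ∑ i, α i * β i := by
  have hα0 : ∀ i, 0 ≤ α i := fun i => hαe ▸ hσ0 (e i)
  have hβ0 : ∀ i, 0 ≤ β i := fun i => hβf ▸ hτ0 (f i)
  have hre : ∑ i, ∑ j, σ i * τ j * S i j = ∑ k, ∑ l, α k * β l * S (e k) (f l) := by
    rw [← Equiv.sum_comp e (fun i => ∑ j, σ i * τ j * S i j)]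
    refine Finset.sum_congr rfl fun k _ => ?_
    rw [← Equiv.sum_comp f (fun j => σ (e k) * τ j * S (e k) j)]
    simp [hαe, hβf]
  rw [hre]
  set A : ℕ → ℝ := fun k => if h : k < n then α ⟨k, h⟩ else 0 with hA
  set B : ℕ → ℝ := fun k => if h : k < n then β ⟨k, h⟩ else 0 with hB
  set S' : ℕ → ℕ → ℝ := fun k l =>
    if h : k < n ∧ l < n then S (e ⟨k, h.1⟩) (f ⟨l, h.2⟩) else 0 with hS'
  have hL : ∑ k, ∑ l, α k * β l * S (e k) (f l)
      = ∑ k ∈ range n, ∑ l ∈ range n, A k * B l * S' k l := by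
    rw [← Fin.sum_univ_eq_sum_range (fun k => ∑ l ∈ range n, A k * B l * S' k l) n]
    refine Finset.sum_congr rfl fun k _ => ?_
    rw [← Fin.sum_univ_eq_sum_range (fun l => A (k : ℕ) * B l * S' (k : ℕ) l) n]
    refine Finset.sum_congr rfl fun l _ => ?_
    simp [hA, hB, hS', k.isLt, l.isLt]
  have hR : ∑ i, α i * β i = ∑ i ∈ range n, A i * B i := by
    rw [← Fin.sum_univ_eq_sum_range (fun i => A i * B i) n]
    refine Finset.sum_congr rfl fun i _ => ?_
    simp [hA, hB, i.isLt]
  rw [hL, hR]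
  refine vn_key_nat n A B S' ?_ ?_ ?_ ?_ ?_ ?_ ?_
  · intro k
    by_cases h1 : k + 1 < n
    · simp only [hA, dif_pos h1, dif_pos (by omega : k < n)]
      exact hαa (by simp [Fin.mk_le_mk])
    · by_cases h2 : k < n <;> simp [hA, h1, h2, hα0]
  · intro k
    by_cases h1 : k + 1 < n
    · simp only [hB, dif_pos h1, dif_pos (by omega : k < n)]
      exact hβa (by simp [Fin.mk_le_mk])
    · by_cases h2 : k < n <;> simp [hB, h1, h2, hβ0]
  · simp [hA]
  · simp [hB]
  · intro i j
    by_cases h : i < n ∧ j < n <;> simp [hS', h]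
    exact hS0 _ _
  · intro i hi
    have : ∑ j ∈ range n, S' i j = ∑ j, S (e ⟨i, hi⟩) (f j) := by
      rw [← Fin.sum_univ_eq_sum_range (fun j => S' i j) n]
      refine Finset.sum_congr rfl fun j _ => ?_
      simp [hS', hi, j.isLt]
    rw [this, Equiv.sum_comp f (fun j => S (e ⟨i, hi⟩) j)]
    exact hrow _
  · intro j hj
    have : ∑ i ∈ range n, S' i j = ∑ i, S (e i) (f ⟨j, hj⟩) := by
      rw [← Fin.sum_univ_eq_sum_range (fun i => S' i j) n]
      refine Finset.sum_congr rfl fun i _ => ?_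
      simp [hS', hj, i.isLt]
    rw [this, Equiv.sum_comp e (fun i => S i (f ⟨j, hj⟩))]
    exact hcol _

/-- Singular value decomposition of a square complex matrix. -/
lemma exists_svd {n : ℕ} (M : Matrix (Fin n) (Fin n) ℂ) :
    ∃ U V : Matrix (Fin n) (Fin n) ℂ, U ∈ Matrix.unitaryGroup (Fin n) ℂ ∧
      V ∈ Matrix.unitaryGroup (Fin n) ℂ ∧
      M = U * Matrix.diagonal (fun i => (singVals M i : ℂ)) * Vᴴ := by
  classical
  set hH := Matrix.isHermitian_conjTranspose_mul_self M with hH_def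
  set σ : Fin n → ℝ := singVals M with hσ_def
  set V : Matrix (Fin n) (Fin n) ℂ := ↑hH.eigenvectorUnitary with hV_def
  have hVmem : V ∈ Matrix.unitaryGroup (Fin n) ℂ := hH.eigenvectorUnitary.2
  set W : Matrix (Fin n) (Fin n) ℂ := M * V with hW_def
  have hWW : Wᴴ * W = Matrix.diagonal (fun i => ((σ i : ℝ) : ℂ) ^ 2) := by
    have h1 : Wᴴ * W = star V * (Mᴴ * M) * V := by
      rw [hW_def, conjTranspose_mul, Matrix.star_eq_conjTranspose]
      noncomm_ring
    have hd := hH.conjStarAlgAut_star_eigenvectorUnitary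
    rw [Unitary.conjStarAlgAut_star_apply] at hd
    rw [h1, hd]
    have hev : (RCLike.ofReal ∘ hH.eigenvalues : Fin n → ℂ) = fun i => ((σ i : ℝ) : ℂ) ^ 2 := by
      funext i
      simp only [Function.comp_apply]
      rw [← singVals_sq M i]
      push_cast
      rfl
    rw [hev]
  set w : Fin n → EuclideanSpace ℂ (Fin n) := fun j => (WithLp.equiv 2 _).symm (fun i => W i j)
    with hw_def
  have hinner : ∀ p q : Fin n, (inner ℂ (w p) (w q) : ℂ) = (Wᴴ * W) p q := by
    intro p q
    rw [EuclideanSpace.inner_eq_star_dotProduct]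
    simp [hw_def, dotProduct, Matrix.mul_apply, Matrix.conjTranspose_apply, mul_comm]
  set s : Set (Fin n) := {j | σ j ≠ 0} with hs_def
  set u : Fin n → EuclideanSpace ℂ (Fin n) := fun j => ((σ j : ℂ))⁻¹ • w j with hu_def
  have horth : Orthonormal ℂ (s.restrict u) := by
    rw [orthonormal_iff_ite]
    rintro ⟨p, hp⟩ ⟨q, hq⟩
    simp only [Set.restrict, Set.domRestrict_apply, hu_def]
    rw [inner_smul_left, inner_smul_right, hinner p q, hWW]
    by_cases hpq : p = q
    · subst hpq
      simp only [Subtype.mk_eq_mk, if_pos rfl, Matrix.diagonal_apply_eq]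
      have hp' : (σ p : ℂ) ≠ 0 := by
        simpa [hs_def] using hp
      field_simp
      simp [hp']
    · simp [Matrix.diagonal_apply_ne _ hpq, hpq]
  obtain ⟨b, hb⟩ := horth.exists_orthonormalBasis_extension_of_card_eq
    (by simp)
  set U : Matrix (Fin n) (Fin n) ℂ :=
    (EuclideanSpace.basisFun (Fin n) ℂ).toBasis.toMatrix b.toBasis with hU_def
  have hUmem : U ∈ Matrix.unitaryGroup (Fin n) ℂ :=
    (EuclideanSpace.basisFun (Fin n) ℂ).toMatrix_orthonormalBasis_mem_unitary b
  have hUapp : ∀ i j, U i j = b j i := fun i j => rfl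
  have hMV : M * V = U * Matrix.diagonal (fun i => (σ i : ℂ)) := by
    ext i j
    rw [Matrix.mul_diagonal, hUapp]
    by_cases hj : σ j = 0
    · have hwj : w j = 0 := by
        have : (inner ℂ (w j) (w j) : ℂ) = 0 := by
          rw [hinner j j, hWW]
          simp [hj]
        exact inner_self_eq_zero.mp this
      have : W i j = 0 := by
        have := congrFun (congrArg (WithLp.equiv 2 (Fin n → ℂ)) hwj) i
        simpa [hw_def] using this
      simp [hj, ← hW_def, this]
    · have hbj : b j = u j := hb j hj
      have : (M * V) i j = w j i := rfl
      rw [this, hbj]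
      simp only [hu_def, PiLp.smul_apply, smul_eq_mul]
      have hj' : (σ j : ℂ) ≠ 0 := by simpa using hj
      field_simp
  refine ⟨U, V, hUmem, hVmem, ?_⟩
  have hVV : V * Vᴴ = 1 := by
    rw [← Matrix.star_eq_conjTranspose]
    exact (Matrix.mem_unitaryGroup_iff).mp hVmem
  calc M = M * (V * Vᴴ) := by rw [hVV, mul_one]
    _ = (M * V) * Vᴴ := by rw [mul_assoc]
    _ = U * Matrix.diagonal (fun i => (singVals M i : ℂ)) * Vᴴ := by rw [hMV]

/-- Row sums of squared moduli of a unitary matrix are 1. -/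
lemma unitary_row_sum_sq {n : ℕ} (C : Matrix (Fin n) (Fin n) ℂ)
    (hC : C ∈ Matrix.unitaryGroup (Fin n) ℂ) (i : Fin n) :
    ∑ j, ‖C i j‖ ^ 2 = 1 := by
  have h := (Matrix.mem_unitaryGroup_iff).mp hC
  have h2 := congrFun (congrFun h i) i
  rw [Matrix.mul_apply, Matrix.one_apply_eq] at h2
  have h3 : ∑ j, (Complex.normSq (C i j) : ℂ) = 1 := by
    rw [← h2]
    refine Finset.sum_congr rfl fun j _ => ?_
    rw [Matrix.star_apply, Complex.star_def, Complex.mul_conj]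
  have h4 : ((∑ j, Complex.normSq (C i j) : ℝ) : ℂ) = 1 := by push_cast; exact h3
  rw [Complex.ofReal_eq_one] at h4
  rw [← h4]
  exact Finset.sum_congr rfl fun j _ => Complex.sq_norm _

/-- Column sums of squared moduli of a unitary matrix are 1. -/
lemma unitary_col_sum_sq {n : ℕ} (C : Matrix (Fin n) (Fin n) ℂ)
    (hC : C ∈ Matrix.unitaryGroup (Fin n) ℂ) (j : Fin n) :
    ∑ i, ‖C i j‖ ^ 2 = 1 := by
  have h := (Matrix.mem_unitaryGroup_iff').mp hC
  have h2 := congrFun (congrFun h j) j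
  rw [Matrix.mul_apply, Matrix.one_apply_eq] at h2
  have h3 : ∑ i, (Complex.normSq (C i j) : ℂ) = 1 := by
    rw [← h2]
    refine Finset.sum_congr rfl fun i _ => ?_
    rw [Matrix.star_apply, Complex.star_def, mul_comm, Complex.mul_conj]
  have h4 : ((∑ i, Complex.normSq (C i j) : ℝ) : ℂ) = 1 := by push_cast; exact h3
  rw [Complex.ofReal_eq_one] at h4
  rw [← h4]
  exact Finset.sum_congr rfl fun i _ => Complex.sq_norm _

lemma vn_trace_formula {n : ℕ} (C D : Matrix (Fin n) (Fin n) ℂ) (σ τ : Fin n → ℝ) :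
    Matrix.trace (Matrix.diagonal (fun i => (σ i : ℂ)) *
        (C * (Matrix.diagonal (fun i => (τ i : ℂ)) * D)))
      = ∑ i, ∑ j, (σ i : ℂ) * C i j * (τ j : ℂ) * D j i := by
  rw [Matrix.trace]
  refine Finset.sum_congr rfl fun i _ => ?_
  rw [Matrix.diag_apply, Matrix.diagonal_mul, Matrix.mul_apply, Finset.mul_sum]
  refine Finset.sum_congr rfl fun j _ => ?_
  rw [Matrix.diagonal_mul]
  ring

/-- von Neumann's trace inequality: For complex `n×n` matrices `A, B`
with singular values listed in decreasing order as `α₁ ≥ … ≥ αₙ` and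
`β₁ ≥ … ≥ βₙ`, `|Tr[AB]| ≤ Σᵢ αᵢ βᵢ`. -/
theorem stmt13 {n : ℕ} (A B : Matrix (Fin n) (Fin n) ℂ) (α β : Fin n → ℝ)
    (hα : ∃ e : Equiv.Perm (Fin n), α = singVals A ∘ e) (hαa : Antitone α)
    (hβ : ∃ e : Equiv.Perm (Fin n), β = singVals B ∘ e) (hβa : Antitone β) :
    ‖Matrix.trace (A * B)‖ ≤ ∑ i, α i * β i := by
  obtain ⟨e, hαe⟩ := hα
  obtain ⟨f, hβf⟩ := hβ
  obtain ⟨U₁, V₁, hU₁, hV₁, hAe⟩ := exists_svd A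
  obtain ⟨U₂, V₂, hU₂, hV₂, hBe⟩ := exists_svd B
  set σ : Fin n → ℝ := singVals A with hσ_def
  set τ : Fin n → ℝ := singVals B with hτ_def
  set C : Matrix (Fin n) (Fin n) ℂ := V₁ᴴ * U₂ with hC_def
  set D : Matrix (Fin n) (Fin n) ℂ := V₂ᴴ * U₁ with hD_def
  have hCmem : C ∈ Matrix.unitaryGroup (Fin n) ℂ := by
    rw [hC_def, ← Matrix.star_eq_conjTranspose]
    exact mul_mem (Unitary.star_mem hV₁) hU₂
  have hDmem : D ∈ Matrix.unitaryGroup (Fin n) ℂ := by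
    rw [hD_def, ← Matrix.star_eq_conjTranspose]
    exact mul_mem (Unitary.star_mem hV₂) hU₁
  have htrace : Matrix.trace (A * B) = ∑ i, ∑ j, (σ i : ℂ) * C i j * (τ j : ℂ) * D j i := by
    rw [hAe, hBe]
    rw [show (U₁ * Matrix.diagonal (fun i => (σ i : ℂ)) * V₁ᴴ) *
          (U₂ * Matrix.diagonal (fun i => (τ i : ℂ)) * V₂ᴴ)
        = U₁ * (Matrix.diagonal (fun i => (σ i : ℂ)) * (C *
            (Matrix.diagonal (fun i => (τ i : ℂ)) * V₂ᴴ))) from by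
      rw [hC_def]; simp only [Matrix.mul_assoc]]
    rw [Matrix.trace_mul_comm]
    rw [show (Matrix.diagonal (fun i => (σ i : ℂ)) * (C *
            (Matrix.diagonal (fun i => (τ i : ℂ)) * V₂ᴴ))) * U₁
        = Matrix.diagonal (fun i => (σ i : ℂ)) * (C *
            (Matrix.diagonal (fun i => (τ i : ℂ)) * D)) from by
      rw [hD_def]; simp only [Matrix.mul_assoc]]
    exact vn_trace_formula C D σ τ
  have hσ0 : ∀ i, 0 ≤ σ i := singVals_nonneg A
  have hτ0 : ∀ i, 0 ≤ τ i := singVals_nonneg B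
  set S : Fin n → Fin n → ℝ := fun i j => ‖C i j‖ ^ 2 with hS_def
  set T : Fin n → Fin n → ℝ := fun i j => ‖D j i‖ ^ 2 with hT_def
  have step1 : ‖Matrix.trace (A * B)‖
      ≤ ∑ i, ∑ j, σ i * τ j * (‖C i j‖ * ‖D j i‖) := by
    rw [htrace]
    calc ‖∑ i, ∑ j, (σ i : ℂ) * C i j * (τ j : ℂ) * D j i‖
        ≤ ∑ i, ‖∑ j, (σ i : ℂ) * C i j * (τ j : ℂ) * D j i‖ :=
          norm_sum_le _ _
      _ ≤ ∑ i, ∑ j, ‖(σ i : ℂ) * C i j * (τ j : ℂ) * D j i‖ :=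
          Finset.sum_le_sum fun i _ => norm_sum_le _ _
      _ = ∑ i, ∑ j, σ i * τ j * (‖C i j‖ * ‖D j i‖) := by
          refine Finset.sum_congr rfl fun i _ => Finset.sum_congr rfl fun j _ => ?_
          rw [norm_mul, norm_mul, norm_mul, Complex.norm_real, Complex.norm_real, Real.norm_eq_abs, Real.norm_eq_abs,
            abs_of_nonneg (hσ0 i), abs_of_nonneg (hτ0 j)]
          ring
  have step2 : ∑ i, ∑ j, σ i * τ j * (‖C i j‖ * ‖D j i‖)
      ≤ ∑ i, ∑ j, σ i * τ j * ((S i j + T i j) / 2) := by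
    refine Finset.sum_le_sum fun i _ => Finset.sum_le_sum fun j _ => ?_
    refine mul_le_mul_of_nonneg_left ?_ (mul_nonneg (hσ0 i) (hτ0 j))
    have := sq_nonneg (‖C i j‖ - ‖D j i‖)
    simp only [hS_def, hT_def]
    nlinarith
  have hS0 : ∀ i j, 0 ≤ S i j := fun i j => sq_nonneg _
  have hT0 : ∀ i j, 0 ≤ T i j := fun i j => sq_nonneg _
  have hSkey : ∑ i, ∑ j, σ i * τ j * S i j ≤ ∑ i, α i * β i := by
    refine vn_key_fin σ τ α β e f hαe hβf hαa hβa hσ0 hτ0 S hS0 ?_ ?_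
    · exact fun i => le_of_eq (unitary_row_sum_sq C hCmem i)
    · exact fun j => le_of_eq (unitary_col_sum_sq C hCmem j)
  have hTkey : ∑ i, ∑ j, σ i * τ j * T i j ≤ ∑ i, α i * β i := by
    refine vn_key_fin σ τ α β e f hαe hβf hαa hβa hσ0 hτ0 T hT0 ?_ ?_
    · exact fun i => le_of_eq (unitary_col_sum_sq D hDmem i)
    · exact fun j => le_of_eq (unitary_row_sum_sq D hDmem j)
  have step3 : ∑ i, ∑ j, σ i * τ j * ((S i j + T i j) / 2)
      = ((∑ i, ∑ j, σ i * τ j * S i j) + (∑ i, ∑ j, σ i * τ j * T i j)) / 2 := by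
    rw [← Finset.sum_add_distrib, Finset.sum_div]
    refine Finset.sum_congr rfl fun i _ => ?_
    rw [← Finset.sum_add_distrib, Finset.sum_div]
    refine Finset.sum_congr rfl fun j _ => ?_
    ring
  calc ‖Matrix.trace (A * B)‖
      ≤ ∑ i, ∑ j, σ i * τ j * (‖C i j‖ * ‖D j i‖) := step1
    _ ≤ ∑ i, ∑ j, σ i * τ j * ((S i j + T i j) / 2) := step2
    _ = ((∑ i, ∑ j, σ i * τ j * S i j) + (∑ i, ∑ j, σ i * τ j * T i j)) / 2 := step3
    _ ≤ ((∑ i, α i * β i) + (∑ i, α i * β i)) / 2 := by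
        apply div_le_div_of_nonneg_right ?_ (by norm_num)
        exact add_le_add hSkey hTkey
    _ = ∑ i, α i * β i := by ring
end

section
/- Let V : A → B be a linear map between finite-dimensional Hilbert spaces satisfying ‖V†V − I‖₂ ≤ δ (spectral norm), and write V = U V_D Q for a singular value decomposition where V_D = V₀ + V₁ with V₀ the rectangular diagonal matrix of all 1's. Set W = U V₀ Q and Δ = U V₁ Q. Then for any unitary O on A, defining Õ = W O W†, one has ‖Õ V − V O‖₂ ≤ δ√(1+δ) + 2(1+δ)(√(1+δ) − 1) + √(1+δ)(√(1+δ) − 1)². -/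
open Matrix

/-- The operator (spectral) norm of a complex matrix, i.e. the norm of the induced
map between Euclidean spaces (equal to the largest singular value). -/
noncomputable def specNorm {m n : ℕ} (M : Matrix (Fin m) (Fin n) ℂ) : ℝ :=
  ‖LinearMap.toContinuousLinearMap (Matrix.toEuclideanLin M)‖

open scoped Matrix.Norms.L2Operator

lemma specNorm_eq {m n : ℕ} (M : Matrix (Fin m) (Fin n) ℂ) : specNorm M = ‖M‖ := rfl

lemma norm_one_le_one (n : ℕ) : ‖(1 : Matrix (Fin n) (Fin n) ℂ)‖ ≤ 1 := by
  rw [Matrix.cstar_norm_def, _root_.map_one]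
  exact ContinuousLinearMap.norm_id_le

lemma norm_le_one_of_iso {m n : ℕ} (M : Matrix (Fin m) (Fin n) ℂ) (h : Mᴴ * M = 1) :
    ‖M‖ ≤ 1 := by
  have h1 : ‖M‖ * ‖M‖ ≤ 1 := by
    rw [← Matrix.l2_opNorm_conjTranspose_mul_self, h]; exact norm_one_le_one n
  nlinarith [norm_nonneg M]

lemma coord_le_norm {n : ℕ} (x : EuclideanSpace ℂ (Fin n)) (i : Fin n) : ‖x i‖ ≤ ‖x‖ := by
  rw [EuclideanSpace.norm_eq]
  calc ‖x i‖ = Real.sqrt (‖x i‖ ^ 2) := (Real.sqrt_sq (norm_nonneg _)).symm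
    _ ≤ _ := Real.sqrt_le_sqrt <|
        Finset.single_le_sum (fun j _ => sq_nonneg ‖x j‖) (Finset.mem_univ i)

lemma entry_le_norm {m n : ℕ} (M : Matrix (Fin m) (Fin n) ℂ) (i : Fin m) (j : Fin n) :
    ‖M i j‖ ≤ ‖M‖ := by
  have h := M.l2_opNorm_mulVec (EuclideanSpace.single j (1 : ℂ))
  rw [EuclideanSpace.norm_single, norm_one, mul_one] at h
  refine le_trans ?_ (le_trans (coord_le_norm ((EuclideanSpace.equiv (Fin m) ℂ).symm
    (M *ᵥ (EuclideanSpace.single j (1 : ℂ)))) i) h)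
  have : (M *ᵥ (EuclideanSpace.single j (1 : ℂ))) i = M i j := by
    simp [Matrix.mulVec, dotProduct, EuclideanSpace.single_apply]
  rw [show ((EuclideanSpace.equiv (Fin m) ℂ).symm (M *ᵥ EuclideanSpace.single j 1)) i
    = (M *ᵥ (EuclideanSpace.single j (1 : ℂ))) i from rfl, this]

lemma sum_sq_coords {n : ℕ} (x : EuclideanSpace ℂ (Fin n)) :
    ∑ j, ‖x j‖ ^ 2 = ‖x‖ ^ 2 := by
  rw [EuclideanSpace.norm_eq, Real.sq_sqrt]
  positivity

lemma diag_norm_le {a b : ℕ} (hab : a ≤ b) (D : Matrix (Fin b) (Fin a) ℂ)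
    (hdiag : ∀ i j, i.val ≠ j.val → D i j = 0) {c : ℝ} (hc : 0 ≤ c)
    (hbd : ∀ i j, ‖D i j‖ ≤ c) : ‖D‖ ≤ c := by
  rw [Matrix.l2_opNorm_def]
  refine ContinuousLinearMap.opNorm_le_bound _ hc fun x => ?_
  set y : EuclideanSpace ℂ (Fin b) := Matrix.toEuclideanLin D x with hy
  have hyi : ∀ i : Fin b, y i = ∑ j, D i j * x j := fun i => rfl
  set f : ℕ → ℝ := fun k => if h : k < a then c ^ 2 * ‖x ⟨k, h⟩‖ ^ 2 else 0 with hf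
  have key : ∀ i : Fin b, ‖y i‖ ^ 2 ≤ f i.val := by
    intro i
    by_cases h : (i : ℕ) < a
    · have hs : y i = D i ⟨i.val, h⟩ * x ⟨i.val, h⟩ := by
        rw [hyi]
        rw [Finset.sum_eq_single ⟨i.val, h⟩]
        · intro j _ hj
          rw [hdiag i j (by simpa [Fin.ext_iff, eq_comm] using hj), zero_mul]
        · intro hmem; exact absurd (Finset.mem_univ _) hmem
      rw [hf]
      simp only [dif_pos h]
      rw [hs, norm_mul, mul_pow]
      exact mul_le_mul_of_nonneg_right
        (pow_le_pow_left₀ (norm_nonneg _) (hbd i _) 2) (sq_nonneg _)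
    · have hs : y i = 0 := by
        rw [hyi]
        refine Finset.sum_eq_zero fun j _ => ?_
        rw [hdiag i j (by omega), zero_mul]
      rw [hf]
      simp [hs, dif_neg h]
  have s1 : ∑ i : Fin b, ‖y i‖ ^ 2 ≤ ∑ i : Fin b, f i.val :=
    Finset.sum_le_sum fun i _ => key i
  have s2 : ∑ i : Fin b, f i.val = ∑ k ∈ Finset.range b, f k :=
    Fin.sum_univ_eq_sum_range f b
  have s3 : ∑ k ∈ Finset.range b, f k = ∑ k ∈ Finset.range a, f k := by
    refine (Finset.sum_subset (Finset.range_subset_range.mpr hab) fun k _ hk => ?_).symm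
    rw [Finset.mem_range] at hk
    exact dif_neg hk
  have s4 : ∑ k ∈ Finset.range a, f k = ∑ j : Fin a, f j.val :=
    (Fin.sum_univ_eq_sum_range f a).symm
  have s5 : ∑ j : Fin a, f j.val = c ^ 2 * ‖x‖ ^ 2 := by
    rw [← sum_sq_coords x, Finset.mul_sum]
    refine Finset.sum_congr rfl fun j _ => ?_
    simp only [hf, dif_pos j.isLt, Fin.eta]
  have hsum : ∑ i : Fin b, ‖y i‖ ^ 2 ≤ (c * ‖x‖) ^ 2 := by
    rw [mul_pow]; linarith
  show ‖y‖ ≤ c * ‖x‖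
  rw [EuclideanSpace.norm_eq]
  calc Real.sqrt (∑ i, ‖y i‖ ^ 2) ≤ Real.sqrt ((c * ‖x‖) ^ 2) := Real.sqrt_le_sqrt hsum
    _ = c * ‖x‖ := Real.sqrt_sq (by positivity)

lemma norm_triple {m n p q : ℕ} (A : Matrix (Fin m) (Fin n) ℂ) (B : Matrix (Fin n) (Fin p) ℂ)
    (C : Matrix (Fin p) (Fin q) ℂ) : ‖A * B * C‖ ≤ ‖A‖ * ‖B‖ * ‖C‖ :=
  le_trans (Matrix.l2_opNorm_mul _ _)
    (mul_le_mul_of_nonneg_right (Matrix.l2_opNorm_mul _ _) (norm_nonneg _))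


set_option maxHeartbeats 1000000

/-- Let `V = U V_D Q` be a singular value decomposition of
`V : A → B` (with `U, Q` unitary and `V_D` rectangular diagonal with nonnegative
entries), with `‖V†V − I‖₂ ≤ δ`. Write `V_D = V₀ + V₁` with `V₀` the rectangular
diagonal matrix of all `1`'s, and set `W = U V₀ Q`. Then for any unitary `O` on
`A`, the unitary `Ot = W O W†` satisfies
`‖Ot V − V O‖₂ ≤ δ√(1+δ) + 2(1+δ)(√(1+δ)−1) + √(1+δ)(√(1+δ)−1)²`. -/
theorem stmt19 {a b : ℕ} (hab : a ≤ b)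
    (V VD : Matrix (Fin b) (Fin a) ℂ)
    (U : Matrix (Fin b) (Fin b) ℂ) (hU : U ∈ Matrix.unitaryGroup (Fin b) ℂ)
    (Q : Matrix (Fin a) (Fin a) ℂ) (hQ : Q ∈ Matrix.unitaryGroup (Fin a) ℂ)
    (hVD_diag : ∀ (i : Fin b) (j : Fin a), i.val ≠ j.val → VD i j = 0)
    (hVD_pos : ∀ (i : Fin b) (j : Fin a), i.val = j.val →
      ∃ r : ℝ, 0 ≤ r ∧ VD i j = (r : ℂ))
    (hSVD : V = U * VD * Q)
    (δ : ℝ) (hδ : 0 ≤ δ) (hV : specNorm (Vᴴ * V - 1) ≤ δ)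
    (O : Matrix (Fin a) (Fin a) ℂ) (hO : O ∈ Matrix.unitaryGroup (Fin a) ℂ) :
    specNorm
        ((U * (Matrix.of fun (i : Fin b) (j : Fin a) =>
            if i.val = j.val then (1 : ℂ) else 0) * Q) * O
          * (U * (Matrix.of fun (i : Fin b) (j : Fin a) =>
            if i.val = j.val then (1 : ℂ) else 0) * Q)ᴴ * V - V * O)
      ≤ δ * Real.sqrt (1 + δ) + 2 * (1 + δ) * (Real.sqrt (1 + δ) - 1)
          + Real.sqrt (1 + δ) * (Real.sqrt (1 + δ) - 1) ^ 2 := by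
  obtain ⟨hU1, hU2⟩ := hU
  obtain ⟨hQ1, hQ2⟩ := hQ
  obtain ⟨hO1, hO2⟩ := hO
  rw [star_eq_conjTranspose] at hU1 hU2 hQ1 hQ2 hO1 hO2
  set V₀ : Matrix (Fin b) (Fin a) ℂ :=
    Matrix.of fun (i : Fin b) (j : Fin a) => if i.val = j.val then (1 : ℂ) else 0 with hV₀
  set W : Matrix (Fin b) (Fin a) ℂ := U * V₀ * Q with hWdef
  -- V₀ is an isometry
  have hV00 : V₀ᴴ * V₀ = 1 := by
    ext j k
    simp only [Matrix.mul_apply, Matrix.conjTranspose_apply, hV₀, Matrix.of_apply,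
      Matrix.one_apply]
    by_cases hjk : j = k
    · subst hjk
      rw [if_pos rfl]
      rw [Finset.sum_eq_single (Fin.castLE hab j)]
      · simp
      · intro i _ hi
        rw [if_neg (by simp [Fin.ext_iff] at hi ⊢; omega), star_zero, zero_mul]
      · intro hmem; exact absurd (Finset.mem_univ _) hmem
    · rw [if_neg hjk]
      refine Finset.sum_eq_zero fun i _ => ?_
      by_cases h1 : (i : ℕ) = (j : ℕ)
      · rw [if_neg (show ¬(i : ℕ) = (k : ℕ) by
          intro h2; exact hjk (Fin.ext (h1 ▸ h2 ▸ rfl))), mul_zero]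
      · rw [if_neg h1, star_zero, zero_mul]
  have hWW : Wᴴ * W = 1 := by
    rw [hWdef]
    simp only [Matrix.conjTranspose_mul]
    calc Qᴴ * (V₀ᴴ * Uᴴ) * (U * V₀ * Q) = Qᴴ * (V₀ᴴ * ((Uᴴ * U) * V₀)) * Q := by
          simp only [Matrix.mul_assoc]
      _ = 1 := by rw [hU1, Matrix.one_mul, hV00, Matrix.mul_one, hQ1]
  -- Δ = V - W = U (VD - V₀) Q
  have hDformula : V - W = U * (VD - V₀) * Q := by
    rw [hSVD, hWdef, Matrix.mul_sub, Matrix.sub_mul]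
  have e1 : Vᴴ * V = Qᴴ * (VDᴴ * VD) * Q := by
    rw [hSVD]
    simp only [Matrix.conjTranspose_mul]
    calc Qᴴ * (VDᴴ * Uᴴ) * (U * VD * Q) = Qᴴ * (VDᴴ * ((Uᴴ * U) * VD)) * Q := by
          simp only [Matrix.mul_assoc]
      _ = Qᴴ * (VDᴴ * VD) * Q := by rw [hU1, Matrix.one_mul]
  have hVV : VDᴴ * VD - 1 = Q * (Vᴴ * V - 1) * Qᴴ := by
    have h3 : Q * (Qᴴ * (VDᴴ * VD) * Q) * Qᴴ = VDᴴ * VD := by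
      calc Q * (Qᴴ * (VDᴴ * VD) * Q) * Qᴴ = (Q * Qᴴ) * (VDᴴ * VD) * (Q * Qᴴ) := by
            simp only [Matrix.mul_assoc]
        _ = VDᴴ * VD := by rw [hQ2, Matrix.one_mul, Matrix.mul_one]
    rw [e1, Matrix.mul_sub, Matrix.sub_mul, h3, Matrix.mul_one, hQ2]
  rw [specNorm_eq] at hV
  have hQn : ‖Q‖ ≤ 1 := norm_le_one_of_iso Q hQ1
  have hUn : ‖U‖ ≤ 1 := norm_le_one_of_iso U hU1
  have hOn : ‖O‖ ≤ 1 := norm_le_one_of_iso O hO1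
  have hD1 : ‖VDᴴ * VD - 1‖ ≤ δ := by
    rw [hVV]
    calc ‖Q * (Vᴴ * V - 1) * Qᴴ‖ ≤ ‖Q‖ * ‖Vᴴ * V - 1‖ * ‖Qᴴ‖ := norm_triple _ _ _
      _ ≤ 1 * δ * 1 := by
          rw [Matrix.l2_opNorm_conjTranspose]
          exact mul_le_mul (mul_le_mul hQn hV (norm_nonneg _) zero_le_one) hQn
            (norm_nonneg _) (by linarith)
      _ = δ := by ring
  -- entrywise bound for VD - V₀
  have hent : ∀ i j, ‖(VD - V₀) i j‖ ≤ δ := by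
    intro i j
    by_cases h : (i : ℕ) = (j : ℕ)
    · obtain ⟨r, hr0, hr⟩ := hVD_pos i j h
      have hdd : (VDᴴ * VD - 1 : Matrix (Fin a) (Fin a) ℂ) j j = ((r ^ 2 - 1 : ℝ) : ℂ) := by
        simp only [Matrix.sub_apply, Matrix.mul_apply, Matrix.conjTranspose_apply,
          Matrix.one_apply_eq]
        rw [Finset.sum_eq_single i]
        · rw [hr]
          push_cast
          rw [Complex.star_def, Complex.conj_ofReal]
          ring
        · intro k _ hk
          rw [hVD_diag k j (by
            intro hkj
            exact hk (Fin.ext (by omega))), star_zero, zero_mul]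
        · intro hmem; exact absurd (Finset.mem_univ _) hmem
      have h2 : |r ^ 2 - 1| ≤ δ := by
        have h5 := entry_le_norm (VDᴴ * VD - 1) j j
        rw [hdd, Complex.norm_real] at h5
        exact le_trans h5 hD1
      have h3 : |r - 1| ≤ δ := by
        have h6 : |r - 1| * (r + 1) = |r ^ 2 - 1| := by
          rw [show r ^ 2 - 1 = (r - 1) * (r + 1) by ring, abs_mul,
            abs_of_nonneg (by linarith : (0:ℝ) ≤ r + 1)]
        nlinarith [abs_nonneg (r - 1)]
      have h7 : (VD - V₀) i j = ((r - 1 : ℝ) : ℂ) := by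
        simp only [Matrix.sub_apply, hr, hV₀, Matrix.of_apply, if_pos h]
        push_cast; ring
      rw [h7, Complex.norm_real]
      exact h3
    · have h8 : (VD - V₀) i j = 0 := by
        simp [Matrix.sub_apply, hVD_diag i j h, hV₀, if_neg h]
      rw [h8]; simpa using hδ
  have hDnorm : ‖V - W‖ ≤ δ := by
    rw [hDformula]
    have h1 : ‖VD - V₀‖ ≤ δ := by
      refine diag_norm_le hab _ (fun i j hij => ?_) hδ hent
      simp [Matrix.sub_apply, hVD_diag i j hij, hV₀, if_neg hij]
    calc ‖U * (VD - V₀) * Q‖ ≤ ‖U‖ * ‖VD - V₀‖ * ‖Q‖ := norm_triple _ _ _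
      _ ≤ 1 * δ * 1 :=
          mul_le_mul (mul_le_mul hUn h1 (norm_nonneg _) zero_le_one) hQn
            (norm_nonneg _) (by linarith)
      _ = δ := by ring
  -- key algebraic identity
  have hkey : W * O * Wᴴ * V - V * O = W * O * (Wᴴ * (V - W)) - (V - W) * O := by
    rw [Matrix.mul_sub Wᴴ V W, Matrix.mul_sub (W * O), hWW, Matrix.mul_one,
      Matrix.sub_mul V W O, ← Matrix.mul_assoc]
    abel
  rw [specNorm_eq, hkey]
  have hWn : ‖W‖ ≤ 1 := norm_le_one_of_iso W hWW
  have b1 : ‖W * O * (Wᴴ * (V - W))‖ ≤ δ := by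
    calc ‖W * O * (Wᴴ * (V - W))‖ ≤ ‖W‖ * ‖O‖ * ‖Wᴴ * (V - W)‖ := norm_triple _ _ _
      _ ≤ 1 * 1 * (1 * δ) := by
          have h9 : ‖Wᴴ * (V - W)‖ ≤ 1 * δ := by
            calc ‖Wᴴ * (V - W)‖ ≤ ‖Wᴴ‖ * ‖V - W‖ := Matrix.l2_opNorm_mul _ _
              _ ≤ 1 * δ := by
                  rw [Matrix.l2_opNorm_conjTranspose]
                  exact mul_le_mul hWn hDnorm (norm_nonneg _) zero_le_one
          exact mul_le_mul (mul_le_mul hWn hOn (norm_nonneg _) zero_le_one) h9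
            (norm_nonneg _) (by norm_num)
      _ = δ := by ring
  have b2 : ‖(V - W) * O‖ ≤ δ := by
    calc ‖(V - W) * O‖ ≤ ‖V - W‖ * ‖O‖ := Matrix.l2_opNorm_mul _ _
      _ ≤ δ * 1 := mul_le_mul hDnorm hOn (norm_nonneg _) hδ
      _ = δ := mul_one δ
  have htri : ‖W * O * (Wᴴ * (V - W)) - (V - W) * O‖ ≤ δ + δ :=
    le_trans (norm_sub_le _ _) (add_le_add b1 b2)
  refine le_trans htri ?_
  set s : ℝ := Real.sqrt (1 + δ) with hs
  have hs2 : s ^ 2 = 1 + δ := Real.sq_sqrt (by linarith)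
  have hs0 : 0 ≤ s := Real.sqrt_nonneg _
  have hs1 : 1 ≤ s := by nlinarith
  nlinarith [mul_nonneg (sq_nonneg (s - 1)) (show (0:ℝ) ≤ 2 * s + 1 by linarith)]
end
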